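/- With the partial order on subsets of {1,...,n} defined by I ≥ J iff |I| ≤ |J| and i_s ≥ j_s for all s ≤ |I|, for subsets I = {i_1 < ... < i_k} and J = {j_1 < ... < j_ℓ} with k ≤ ℓ, the set I ∧ J := {min(i_1,j_1), ..., min(i_k,j_k), j_{k+1}, ..., j_ℓ} is a well-defined subset of size ℓ (the listed elements are strictly increasing), and it is the greatest lower bound (meet) of I and J in this poset. -/

import Mathlib

/-- The s-th smallest element (0-indexed) of a finite set of naturals. -/
def sortNth (I : Finset ℕ) (s : ℕ) : ℕ := (I.sort (· ≤ ·))[s]!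

/-- The Gonciulea–Lakshmibai order: I ≥ J iff |I| ≤ |J| and the s-th smallest
element of I is ≥ the s-th smallest element of J for all s < |I|. -/
def glGe (I J : Finset ℕ) : Prop :=
  I.card ≤ J.card ∧ ∀ s < I.card, sortNth J s ≤ sortNth I s

/-- The meet I ∧ J = {min(i_1,j_1),…,min(i_k,j_k), j_{k+1},…,j_ℓ}
for |I| = k ≤ ℓ = |J|. -/
def glMeetAux (I J : Finset ℕ) : Finset ℕ :=
  (Finset.range J.card).image
    (fun s => if s < I.card then min (sortNth I s) (sortNth J s) else sortNth J s)

lemma sortNth_lt (I : Finset ℕ) {s t : ℕ} (hst : s < t) (ht : t < I.card) :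
    sortNth I s < sortNth I t := by
  have hlen : (I.sort (· ≤ ·)).length = I.card := Finset.length_sort _
  have hs' : s < (I.sort (· ≤ ·)).length := by omega
  have ht' : t < (I.sort (· ≤ ·)).length := by omega
  have := (List.pairwise_iff_getElem.mp (Finset.sortedLT_sort I).pairwise) s t hs' ht' hst
  simpa [sortNth, getElem!_pos (I.sort (· ≤ ·)) s hs', getElem!_pos (I.sort (· ≤ ·)) t ht'] using this

/-- For subsets I, J of {1,…,n} with |I| = k ≤ ℓ = |J|, the set
I ∧ J = {min(i_1,j_1),…,min(i_k,j_k), j_{k+1},…,j_ℓ} is a well-defined subset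
of size ℓ (its listed elements are strictly increasing), and it is the
greatest lower bound of I and J in the Gonciulea–Lakshmibai order. -/
theorem stmt_5 (n : ℕ) (I J : Finset ℕ) (hIn : I ⊆ Finset.Icc 1 n)
    (hJn : J ⊆ Finset.Icc 1 n) (hcard : I.card ≤ J.card) :
    (∀ s t, s < t → t < J.card →
      (if s < I.card then min (sortNth I s) (sortNth J s) else sortNth J s) <
      (if t < I.card then min (sortNth I t) (sortNth J t) else sortNth J t)) ∧
    (glMeetAux I J).card = J.card ∧
    glGe I (glMeetAux I J) ∧ glGe J (glMeetAux I J) ∧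
    (∀ L : Finset ℕ, L ⊆ Finset.Icc 1 n → glGe I L → glGe J L →
      glGe (glMeetAux I J) L) := by
  set ℓ := J.card with hℓ
  set f : ℕ → ℕ := fun s =>
    if s < I.card then min (sortNth I s) (sortNth J s) else sortNth J s with hf
  have hmono : ∀ s t, s < t → t < ℓ → f s < f t := by
    intro s t hst ht
    have hJlt : sortNth J s < sortNth J t := sortNth_lt J hst ht
    by_cases hti : t < I.card
    · have hsi : s < I.card := lt_trans hst hti
      have hIlt : sortNth I s < sortNth I t := sortNth_lt I hst hti
      simp only [hf, if_pos hsi, if_pos hti]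
      exact lt_min (lt_of_le_of_lt (min_le_left _ _) hIlt)
        (lt_of_le_of_lt (min_le_right _ _) hJlt)
    · by_cases hsi : s < I.card
      · simp only [hf, if_pos hsi, if_neg hti]
        exact lt_of_le_of_lt (min_le_right _ _) hJlt
      · simp only [hf, if_neg hsi, if_neg hti]
        exact hJlt
  have hsortEq : (glMeetAux I J).sort (· ≤ ·) = (List.range ℓ).map f := by
    refine List.Perm.eq_of_pairwise' (r := (· ≤ ·)) (Finset.pairwise_sort _ _) ?_ ?_
    · apply List.pairwise_iff_getElem.mpr
      intro i j hi hj hij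
      simp only [List.length_map, List.length_range] at hi hj
      simp only [List.getElem_map, List.getElem_range]
      exact le_of_lt (hmono i j hij hj)
    · have hnodup : (((Finset.range ℓ).val).map f).Nodup := by
        apply Multiset.Nodup.map_on ?_ (Finset.range ℓ).nodup
        intro a ha b hb hab
        simp only [Finset.mem_val, Finset.mem_range] at ha hb
        by_contra hne
        rcases Nat.lt_or_ge a b with h | h
        · exact absurd hab (ne_of_lt (hmono a b h hb))
        · exact absurd hab.symm (ne_of_lt (hmono b a (lt_of_le_of_ne h (Ne.symm hne)) ha))
      have hval : (glMeetAux I J).val = ↑((List.range ℓ).map f) := by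
        simp only [glMeetAux, Finset.image_val, Multiset.dedup_eq_self.mpr hnodup]
        exact (Multiset.dedup_eq_self.mpr hnodup).trans rfl
      have : ↑((glMeetAux I J).sort (· ≤ ·)) = (↑((List.range ℓ).map f) : Multiset ℕ) := by
        rw [Finset.sort_eq, hval]
      exact Quotient.exact this
  have hcardM : (glMeetAux I J).card = ℓ := by
    have := Finset.length_sort (α := ℕ) (· ≤ ·) (s := glMeetAux I J)
    rw [hsortEq] at this
    simpa using this.symm
  have hMnth : ∀ s < ℓ, sortNth (glMeetAux I J) s = f s := by
    intro s hs
    have hs' : s < ((List.range ℓ).map f).length := by simpa using hs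
    rw [sortNth, hsortEq, getElem!_pos ((List.range ℓ).map f) s hs']
    simp
  refine ⟨fun s t hst ht => hmono s t hst ht, hcardM, ?_, ?_, ?_⟩
  · refine ⟨by omega, fun s hs => ?_⟩
    rw [hMnth s (lt_of_lt_of_le hs hcard)]
    simp only [hf, if_pos hs]
    exact min_le_left _ _
  · refine ⟨by omega, fun s hs => ?_⟩
    rw [hMnth s hs]
    simp only [hf]
    split
    · exact min_le_right _ _
    · exact le_refl _
  · rintro L _ ⟨hIL, hIL2⟩ ⟨hJL, hJL2⟩
    refine ⟨by omega, fun s hs => ?_⟩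
    rw [hcardM] at hs
    rw [hMnth s hs]
    simp only [hf]
    split
    · exact le_min (hIL2 s (by assumption)) (hJL2 s hs)
    · exact hJL2 s hs
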